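/- Let A and B be lists over a type α with decidable equality, of lengths m and n respectively. For every directed path of length ℓ from (0,0) to (m,n) in the LCS grid graph G_{A,B}, there exists a list of length m + n − ℓ that is a sublist of both A and B; consequently every such path satisfies ℓ ≥ m + n − lcsLen(A,B). -/
import Mathlib


/-- `lcsLen s t` is the maximum length of a list that is a sublist
(subsequence) of both `s` and `t`. -/
def lcsLen {α : Type*} [DecidableEq α] (s t : List α) : ℕ :=
  ((s.sublists.filter (fun l => decide (l.Sublist t))).map List.length).foldr max 0

/-- Edge relation of the LCS grid graph `G_{C,B}`: horizontal, vertical,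
and (on character matches) diagonal edges. -/
def GridEdge {α : Type*} (C B : List α) (u v : ℕ × ℕ) : Prop :=
  (v = (u.1, u.2 + 1) ∧ u.1 ≤ C.length ∧ u.2 < B.length) ∨
  (v = (u.1 + 1, u.2) ∧ u.1 < C.length ∧ u.2 ≤ B.length) ∨
  (v = (u.1 + 1, u.2 + 1) ∧
    ∃ (h1 : u.1 < C.length) (h2 : u.2 < B.length), C.get ⟨u.1, h1⟩ = B.get ⟨u.2, h2⟩)

/-- `IsGridPath C B ℓ u v p` : `p` is a directed path of length `ℓ`
from `u` to `v` in the LCS grid graph `G_{C,B}`. -/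
def IsGridPath {α : Type*} (C B : List α) (ℓ : ℕ) (u v : ℕ × ℕ)
    (p : Fin (ℓ + 1) → ℕ × ℕ) : Prop :=
  p 0 = u ∧ p (Fin.last ℓ) = v ∧
    ∀ k : Fin ℓ, GridEdge C B (p k.castSucc) (p k.succ)

private lemma le_foldr_max {L : List ℕ} {a : ℕ} (h : a ∈ L) : a ≤ L.foldr max 0 := by
  induction L with
  | nil => simp at h
  | cons b L ih =>
    simp only [List.foldr_cons]
    rcases List.mem_cons.mp h with rfl | h
    · exact le_max_left _ _
    · exact le_trans (ih h) (le_max_right _ _)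

private lemma length_le_lcsLen {α : Type*} [DecidableEq α] {l s t : List α}
    (hs : l.Sublist s) (ht : l.Sublist t) : l.length ≤ lcsLen s t := by
  apply le_foldr_max
  simp only [List.mem_map]
  exact ⟨l, by simp [List.mem_filter, List.mem_sublists, hs, ht], rfl⟩

private lemma grid_key {α : Type*} (A B : List α) :
    ∀ (ℓ : ℕ) (u : ℕ × ℕ) (p : Fin (ℓ + 1) → ℕ × ℕ),
      IsGridPath A B ℓ u (A.length, B.length) p →
      ∃ l : List α, l.Sublist (A.drop u.1) ∧ l.Sublist (B.drop u.2) ∧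
        u.1 + u.2 + ℓ + l.length = A.length + B.length := by
  intro ℓ
  induction ℓ with
  | zero =>
    intro u p ⟨h0, hl, _⟩
    have : u = (A.length, B.length) := by rw [← h0, ← hl]; rfl
    subst this
    exact ⟨[], by simp⟩
  | succ n ih =>
    intro u p ⟨h0, hl, he⟩
    have hstep := he 0
    rw [show (0 : Fin (n+1)).castSucc = 0 from rfl, h0] at hstep
    set q : Fin (n + 1) → ℕ × ℕ := fun k => p k.succ with hq
    have hpath : IsGridPath A B n (p (Fin.succ 0)) (A.length, B.length) q := by
      refine ⟨rfl, ?_, ?_⟩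
      · rw [hq]; simp only []
        rw [show (Fin.last n).succ = Fin.last (n+1) from rfl]; exact hl
      · intro k
        have := he k.succ
        rwa [show k.succ.castSucc = k.castSucc.succ from (Fin.succ_castSucc k).symm] at this
    obtain ⟨l, hlA, hlB, hlen⟩ := ih (p (Fin.succ 0)) q hpath
    rcases hstep with ⟨hv, _, hj⟩ | ⟨hv, hi, _⟩ | ⟨hv, hi, hj, heq⟩
    · rw [hv] at hlA hlB hlen
      refine ⟨l, hlA, ?_, by omega⟩
      refine hlB.trans ?_
      have : B.drop (u.2 + 1) = (B.drop u.2).drop 1 := by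
        rw [List.drop_drop]
      rw [this]; exact List.drop_sublist 1 _
    · rw [hv] at hlA hlB hlen
      refine ⟨l, ?_, hlB, by omega⟩
      refine hlA.trans ?_
      have : A.drop (u.1 + 1) = (A.drop u.1).drop 1 := by
        rw [List.drop_drop]
      rw [this]; exact List.drop_sublist 1 _
    · rw [hv] at hlA hlB hlen
      refine ⟨A.get ⟨u.1, hi⟩ :: l, ?_, ?_, by simp only [List.length_cons]; omega⟩
      · rw [List.drop_eq_getElem_cons hi]
        exact List.cons_sublist_cons.mpr hlA
      · rw [List.drop_eq_getElem_cons hj, show B[u.2] = A.get ⟨u.1, hi⟩ from heq.symm]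
        exact List.cons_sublist_cons.mpr hlB

/-- Every directed path of length `ℓ` from `(0,0)` to `(m,n)` in `G_{A,B}`
yields a common subsequence of length `m + n - ℓ`; hence
`ℓ ≥ m + n - lcsLen A B`. -/
theorem grid_path_gives_common_subsequence {α : Type*} [DecidableEq α]
    (A B : List α) (ℓ : ℕ) (p : Fin (ℓ + 1) → ℕ × ℕ)
    (hp : IsGridPath A B ℓ (0, 0) (A.length, B.length) p) :
    (∃ l : List α, l.length = A.length + B.length - ℓ ∧
        l.Sublist A ∧ l.Sublist B) ∧
      A.length + B.length - lcsLen A B ≤ ℓ := by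
  obtain ⟨l, hlA, hlB, hlen⟩ := grid_key A B ℓ (0, 0) p hp
  simp only [List.drop_zero] at hlA hlB
  simp only at hlen
  have hle := length_le_lcsLen hlA hlB
  exact ⟨⟨l, by omega, hlA, hlB⟩, by omega⟩
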